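/- arXiv:2212.04332 — 2 statements merged into one kernel-verified Lean document; each statement's English description precedes it below -/
import Mathlib

section
/- Let (X,d) be a complete metric space and let (f_n) be a sequence of maps X → X such that each f_n is a contraction with contractivity factor c_n ∈ [0,1). Suppose (f_n) is Cauchy with respect to d̄∞ (for every ε > 0 there is N with d̄∞(f_n, f_m) < ε for all n, m ≥ N) and is eventually decreasing (there exists N ∈ ℕ such that c_{n+1} ≤ c_n for all n ≥ N). Then there exist c ∈ [0,1) and a map f : X → X with d(f(x),f(y)) ≤ c·d(x,y) for all x, y ∈ X, such that d̄∞(f_n, f) → 0 as n → ∞. -/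
noncomputable def dbar {X : Type*} [MetricSpace X] (f g : X → X) : ℝ :=
  ⨆ x : X, dist (f x) (g x) / (1 + dist (f x) (g x))

lemma hmono_aux {a b : ℝ} (ha : 0 ≤ a) (hab : a ≤ b) :
    a / (1 + a) ≤ b / (1 + b) := by
  rw [div_le_div_iff₀ (by linarith) (by linarith)]; nlinarith

lemma dbar_bddAbove {X : Type*} [MetricSpace X] (f g : X → X) :
    BddAbove (Set.range fun x => dist (f x) (g x) / (1 + dist (f x) (g x))) := by
  refine ⟨1, ?_⟩
  rintro y ⟨x, rfl⟩
  rw [div_le_one (by have := dist_nonneg (x := f x) (y := g x); linarith)]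
  have := dist_nonneg (x := f x) (y := g x); linarith

lemma le_dbar {X : Type*} [MetricSpace X] (f g : X → X) (x : X) :
    dist (f x) (g x) / (1 + dist (f x) (g x)) ≤ dbar f g :=
  le_ciSup (dbar_bddAbove f g) x

theorem stmt_3 {X : Type*} [MetricSpace X] [CompleteSpace X]
    (f : ℕ → X → X) (c : ℕ → ℝ)
    (hc : ∀ n, 0 ≤ c n ∧ c n < 1)
    (hcontr : ∀ n, ∀ x y : X, dist (f n x) (f n y) ≤ c n * dist x y)
    (hCauchy : ∀ ε : ℝ, 0 < ε → ∃ N : ℕ, ∀ n ≥ N, ∀ m ≥ N, dbar (f n) (f m) < ε)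
    (hdec : ∃ N : ℕ, ∀ n ≥ N, c (n+1) ≤ c n) :
    ∃ (c' : ℝ) (F : X → X), 0 ≤ c' ∧ c' < 1 ∧
      (∀ x y : X, dist (F x) (F y) ≤ c' * dist x y) ∧
      Filter.Tendsto (fun n => dbar (f n) F) Filter.atTop (nhds 0) := by
  obtain ⟨N₀, hN₀⟩ := hdec
  have hmonoc : ∀ n ≥ N₀, c n ≤ c N₀ := by
    intro n hn
    induction n, hn using Nat.le_induction with
    | base => exact le_refl _
    | succ n hn ih => exact (hN₀ n hn).trans ih
  -- pointwise Cauchy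
  have hcau : ∀ x : X, CauchySeq (fun n => f n x) := by
    intro x
    rw [Metric.cauchySeq_iff]
    intro ε hε
    obtain ⟨N, hN⟩ := hCauchy (ε / (1 + ε)) (by positivity)
    refine ⟨N, fun m hm n hn => ?_⟩
    have h1 : dist (f m x) (f n x) / (1 + dist (f m x) (f n x)) < ε / (1 + ε) :=
      lt_of_le_of_lt (le_dbar (f m) (f n) x) (hN m hm n hn)
    by_contra h
    push_neg at h
    exact absurd h1 (not_lt.mpr (hmono_aux hε.le h))
  choose F hF using fun x => cauchySeq_tendsto_of_complete (hcau x)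
  refine ⟨c N₀, F, (hc N₀).1, (hc N₀).2, ?_, ?_⟩
  · intro x y
    have ht : Filter.Tendsto (fun n => dist (f n x) (f n y)) Filter.atTop
        (nhds (dist (F x) (F y))) := (hF x).dist (hF y)
    refine le_of_tendsto ht ?_
    filter_upwards [Filter.eventually_ge_atTop N₀] with n hn
    exact (hcontr n x y).trans (mul_le_mul_of_nonneg_right (hmonoc n hn) dist_nonneg)
  · rw [Metric.tendsto_atTop]
    intro ε hε
    obtain ⟨N, hN⟩ := hCauchy (ε / 2) (by linarith)
    refine ⟨N, fun n hn => ?_⟩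
    have key : ∀ x : X, dist (f n x) (F x) / (1 + dist (f n x) (F x)) ≤ ε / 2 := by
      intro x
      have hd : Filter.Tendsto (fun m => dist (f n x) (f m x)) Filter.atTop
          (nhds (dist (f n x) (F x))) := tendsto_const_nhds.dist (hF x)
      have hcont : ContinuousAt (fun t : ℝ => t / (1 + t)) (dist (f n x) (F x)) := by
        apply ContinuousAt.div continuousAt_id (by fun_prop)
        have := dist_nonneg (x := f n x) (y := F x)
        intro h; linarith
      refine le_of_tendsto (hcont.tendsto.comp hd) ?_
      filter_upwards [Filter.eventually_ge_atTop N] with m hm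
      exact (le_dbar (f n) (f m) x).trans (hN n hn m hm).le
    have h1 : dbar (f n) F ≤ ε / 2 := Real.iSup_le key (by linarith)
    have h2 : 0 ≤ dbar (f n) F := Real.iSup_nonneg fun x => by positivity
    rw [Real.dist_eq, sub_zero, abs_of_nonneg h2]
    linarith
end

section
/- Let (X,d) be a complete metric space, n ≥ 1, and c ∈ [0,1). For each j ∈ ℕ and each i ∈ {1,…,n}, let f_{i,j} : X → X and f_i : X → X be maps satisfying d(f_{i,j}(x), f_{i,j}(y)) ≤ c·d(x,y) and d(f_i(x), f_i(y)) ≤ c·d(x,y) for all x,y ∈ X. Suppose that for each i, d̄∞(f_{i,j}, f_i) → 0 as j → ∞. Let A_j and A be nonempty compact subsets of X satisfying A_j = ⋃_{i=1}^{n} f_{i,j}(A_j) for every j and A = ⋃_{i=1}^{n} f_i(A) (i.e., A_j and A are the attractors of the respective iterated function systems). Then A_j → A in the Hausdorff metric, i.e., the Hausdorff distance between A_j and A tends to 0 as j → ∞. -/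
open Metric Set

/-- Lipschitz contraction of infDist. -/
lemma infDist_image_le_aux {X : Type*} [MetricSpace X] {c : ℝ} (hc0 : 0 ≤ c)
    {F : X → X} (hF : ∀ x y : X, dist (F x) (F y) ≤ c * dist x y)
    {t : Set X} (ht : t.Nonempty) (x : X) :
    infDist (F x) (F '' t) ≤ c * infDist x t := by
  refine le_of_forall_pos_le_add fun ε hε => ?_
  have hlt : infDist x t < infDist x t + ε / (c + 1) := by
    have : 0 < ε / (c + 1) := div_pos hε (by linarith)
    linarith
  obtain ⟨y, hyt, hyd⟩ := (infDist_lt_iff ht).1 hlt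
  calc infDist (F x) (F '' t) ≤ dist (F x) (F y) :=
        infDist_le_dist_of_mem ⟨y, hyt, rfl⟩
    _ ≤ c * dist x y := hF x y
    _ ≤ c * (infDist x t + ε / (c + 1)) := by
        apply mul_le_mul_of_nonneg_left (le_of_lt hyd) hc0
    _ ≤ c * infDist x t + ε := by
        have h1 : c * (ε / (c + 1)) ≤ ε := by
          rw [mul_div_assoc', div_le_iff₀ (by linarith : (0:ℝ) < c + 1)]
          nlinarith
        rw [mul_add]
        linarith

lemma haus_lip {X : Type*} [MetricSpace X] {c : ℝ} (hc0 : 0 ≤ c)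
    {F : X → X} (hF : ∀ x y : X, dist (F x) (F y) ≤ c * dist x y)
    {s t : Set X} (hs : s.Nonempty) (ht : t.Nonempty)
    (hfin : EMetric.hausdorffEdist s t ≠ ⊤) :
    hausdorffDist (F '' s) (F '' t) ≤ c * hausdorffDist s t := by
  apply hausdorffDist_le_of_infDist
    (mul_nonneg hc0 hausdorffDist_nonneg)
  · rintro _ ⟨x, hx, rfl⟩
    calc infDist (F x) (F '' t) ≤ c * infDist x t := infDist_image_le_aux hc0 hF ht x
      _ ≤ c * hausdorffDist s t :=
        mul_le_mul_of_nonneg_left (infDist_le_hausdorffDist_of_mem hx hfin) hc0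
  · rintro _ ⟨x, hx, rfl⟩
    calc infDist (F x) (F '' s) ≤ c * infDist x s := infDist_image_le_aux hc0 hF hs x
      _ ≤ c * hausdorffDist s t := by
        have h := infDist_le_hausdorffDist_of_mem hx
          (show EMetric.hausdorffEdist t s ≠ ⊤ by rwa [EMetric.hausdorffEdist, hausdorffEDist_comm])
        rw [hausdorffDist_comm] at h
        exact mul_le_mul_of_nonneg_left h hc0

lemma haus_pointwise {X : Type*} [MetricSpace X] {g h : X → X} {s : Set X} {δ : ℝ}
    (hδ : 0 ≤ δ) (hb : ∀ x : X, dist (g x) (h x) ≤ δ) :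
    hausdorffDist (g '' s) (h '' s) ≤ δ := by
  apply hausdorffDist_le_of_mem_dist hδ
  · rintro _ ⟨x, hx, rfl⟩
    exact ⟨h x, ⟨x, hx, rfl⟩, hb x⟩
  · rintro _ ⟨x, hx, rfl⟩
    exact ⟨g x, ⟨x, hx, rfl⟩, (dist_comm (g x) (h x) ▸ hb x)⟩

lemma haus_union {X : Type*} [MetricSpace X] {n : ℕ} {s t : Fin n → Set X} {r : ℝ}
    (hr : 0 ≤ r) (hsne : ∀ i, (s i).Nonempty) (htne : ∀ i, (t i).Nonempty)
    (hfin : ∀ i, EMetric.hausdorffEdist (s i) (t i) ≠ ⊤)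
    (hb : ∀ i, hausdorffDist (s i) (t i) ≤ r) :
    hausdorffDist (⋃ i, s i) (⋃ i, t i) ≤ r := by
  apply hausdorffDist_le_of_infDist hr
  · rintro x hx
    obtain ⟨i, hxi⟩ := mem_iUnion.1 hx
    calc infDist x (⋃ i, t i) ≤ infDist x (t i) :=
        infDist_le_infDist_of_subset (subset_iUnion _ i) (htne i)
      _ ≤ hausdorffDist (s i) (t i) := infDist_le_hausdorffDist_of_mem hxi (hfin i)
      _ ≤ r := hb i
  · rintro x hx
    obtain ⟨i, hxi⟩ := mem_iUnion.1 hx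
    calc infDist x (⋃ i, s i) ≤ infDist x (s i) :=
        infDist_le_infDist_of_subset (subset_iUnion _ i) (hsne i)
      _ ≤ hausdorffDist (t i) (s i) :=
        infDist_le_hausdorffDist_of_mem hxi
          (show EMetric.hausdorffEdist (t i) (s i) ≠ ⊤ by
            rw [EMetric.hausdorffEdist, hausdorffEDist_comm]; exact hfin i)
      _ ≤ r := by rw [hausdorffDist_comm]; exact hb i

theorem stmt_10 {X : Type*} [MetricSpace X] [CompleteSpace X]
    {n : ℕ} (hn : 1 ≤ n) (c : ℝ) (hc0 : 0 ≤ c) (hc1 : c < 1)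
    (f : ℕ → Fin n → X → X) (F : Fin n → X → X)
    (hfcontr : ∀ j i, ∀ x y : X, dist (f j i x) (f j i y) ≤ c * dist x y)
    (hFcontr : ∀ i, ∀ x y : X, dist (F i x) (F i y) ≤ c * dist x y)
    (hconv : ∀ i, Filter.Tendsto (fun j => dbar (f j i) (F i)) Filter.atTop (nhds 0))
    (A : ℕ → Set X) (B : Set X)
    (hAcpt : ∀ j, IsCompact (A j)) (hAne : ∀ j, (A j).Nonempty)
    (hBcpt : IsCompact B) (hBne : B.Nonempty)
    (hAattr : ∀ j, A j = ⋃ i : Fin n, (f j i) '' (A j))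
    (hBattr : B = ⋃ i : Fin n, (F i) '' B) :
    Filter.Tendsto (fun j => Metric.hausdorffDist (A j) B) Filter.atTop (nhds 0) := by
  -- finiteness of hausdorff edist between A j and B
  have hABfin : ∀ j, EMetric.hausdorffEdist (A j) B ≠ ⊤ := fun j =>
    hausdorffEdist_ne_top_of_nonempty_of_bounded (hAne j) hBne
      (hAcpt j).isBounded hBcpt.isBounded
  -- continuity of the maps
  have hfcont : ∀ j i, Continuous (f j i) := fun j i =>
    (LipschitzWith.of_dist_le_mul (K := ⟨c, hc0⟩) (fun x y => hfcontr j i x y)).continuous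
  have hFcont : ∀ i, Continuous (F i) := fun i =>
    (LipschitzWith.of_dist_le_mul (K := ⟨c, hc0⟩) (fun x y => hFcontr i x y)).continuous
  rw [Metric.tendsto_atTop]
  intro ε hε
  set ε₁ : ℝ := ε * (1 - c) / 2 with hε₁def
  have hε₁ : 0 < ε₁ := by
    apply div_pos (mul_pos hε (by linarith)) (by norm_num)
  set η : ℝ := ε₁ / (1 + ε₁) with hηdef
  have hη : 0 < η := div_pos hε₁ (by linarith)


  have hev : ∀ᶠ j in Filter.atTop, ∀ i, dbar (f j i) (F i) < η := by
    rw [Filter.eventually_all]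
    exact fun i => (hconv i).eventually_lt_const hη
  have key : ∀ j, (∀ i, dbar (f j i) (F i) < η) → hausdorffDist (A j) B ≤ ε / 2 := by
    intro j hj
    -- uniform bound on the distance between f j i and F i
    have hub : ∀ i, ∀ x : X, dist (f j i x) (F i x) ≤ ε₁ := by
      intro i x
      set d : ℝ := dist (f j i x) (F i x) with hd
      have hd0 : 0 ≤ d := dist_nonneg
      have hbdd : BddAbove (Set.range fun x : X =>
          dist (f j i x) (F i x) / (1 + dist (f j i x) (F i x))) := by
        refine ⟨1, ?_⟩
        rintro _ ⟨y, rfl⟩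
        have h0 : (0:ℝ) ≤ dist (f j i y) (F i y) := dist_nonneg
        rw [div_le_one (by linarith)]
        linarith
      have h1 : d / (1 + d) ≤ dbar (f j i) (F i) := le_ciSup hbdd x
      have h2 : d / (1 + d) < ε₁ / (1 + ε₁) := lt_of_le_of_lt h1 (hj i)
      rw [div_lt_div_iff₀ (by linarith) (by linarith)] at h2
      nlinarith
    set H : ℝ := hausdorffDist (A j) B with hH
    have hH0 : 0 ≤ H := hausdorffDist_nonneg
    -- all images are compact and nonempty
    have hfAcpt : ∀ i, IsCompact (f j i '' A j) := fun i => (hAcpt j).image (hfcont j i)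
    have hFAcpt : ∀ i, IsCompact (F i '' A j) := fun i => (hAcpt j).image (hFcont i)
    have hFBcpt : ∀ i, IsCompact (F i '' B) := fun i => hBcpt.image (hFcont i)
    have hfAne : ∀ i, (f j i '' A j).Nonempty := fun i => (hAne j).image _
    have hFAne : ∀ i, (F i '' A j).Nonempty := fun i => (hAne j).image _
    have hFBne : ∀ i, (F i '' B).Nonempty := fun i => hBne.image _
    have hfin1 : ∀ i, EMetric.hausdorffEdist (f j i '' A j) (F i '' A j) ≠ ⊤ := fun i =>
      hausdorffEdist_ne_top_of_nonempty_of_bounded (hfAne i) (hFAne i)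
        (hfAcpt i).isBounded (hFAcpt i).isBounded
    have hfin2 : ∀ i, EMetric.hausdorffEdist (F i '' A j) (F i '' B) ≠ ⊤ := fun i =>
      hausdorffEdist_ne_top_of_nonempty_of_bounded (hFAne i) (hFBne i)
        (hFAcpt i).isBounded (hFBcpt i).isBounded
    have hfin3 : ∀ i, EMetric.hausdorffEdist (f j i '' A j) (F i '' B) ≠ ⊤ := fun i =>
      hausdorffEdist_ne_top_of_nonempty_of_bounded (hfAne i) (hFBne i)
        (hfAcpt i).isBounded (hFBcpt i).isBounded
    have hpair : ∀ i, hausdorffDist (f j i '' A j) (F i '' B) ≤ ε₁ + c * H := by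
      intro i
      calc hausdorffDist (f j i '' A j) (F i '' B)
          ≤ hausdorffDist (f j i '' A j) (F i '' A j)
            + hausdorffDist (F i '' A j) (F i '' B) :=
            hausdorffDist_triangle (hfin1 i)
        _ ≤ ε₁ + c * H := by
            have hb1 : hausdorffDist (f j i '' A j) (F i '' A j) ≤ ε₁ :=
              haus_pointwise hε₁.le (hub i)
            have hb2 : hausdorffDist (F i '' A j) (F i '' B) ≤ c * H :=
              haus_lip hc0 (hFcontr i) (hAne j) hBne (hABfin j)
            linarith
    have hmain : H ≤ ε₁ + c * H := by
      have h2 := haus_union (r := ε₁ + c * H)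
        (by positivity) hfAne hFBne hfin3 hpair
      rw [← hAattr j, ← hBattr] at h2
      exact h2
    rw [hε₁def] at hmain
    nlinarith
  rw [Filter.eventually_atTop] at hev
  obtain ⟨N, hN⟩ := hev
  refine ⟨N, fun j hj => ?_⟩
  rw [Real.dist_eq, sub_zero, abs_of_nonneg hausdorffDist_nonneg]
  have := key j (hN j hj)
  linarith
end
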